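/- arXiv:1706.08228 — 2 statements merged into one kernel-verified Lean document; each statement's English description precedes it below -/
import Mathlib

section
/- The set W is closed under addition and multiplication and contains 1, i.e. W is a subring of R = ℤ × ℤ[√2] × ℤ[√3]; moreover, as a ℤ-module W is free of rank 5 with basis v₁ = (1, 1, 1), v₂ = (0, 2, 0), v₃ = (0, 0, 2), v₄ = (0, 2√2, 0), v₅ = (−1, −1+√2, 2−√3); that is, W = ℤv₁ + ℤv₂ + ℤv₃ + ℤv₄ + ℤv₅. -/
abbrev Rng : Type := ℤ × Zsqrtd 2 × Zsqrtd 3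

/-- The set `W` of triples `(a, b₁ + b₂√2, c₁ + c₂√3)` with
`a ≡ b₁ (mod 2)`, `a ≡ c₁ + c₂ (mod 2)` and `b₂ ≡ c₂ (mod 2)`. -/
def Wset : Set Rng :=
  {p | p.1 ≡ p.2.1.re [ZMOD 2] ∧ p.1 ≡ p.2.2.re + p.2.2.im [ZMOD 2] ∧
       p.2.1.im ≡ p.2.2.im [ZMOD 2]}

/-- `v₁ = (1,1,1)`, `v₂ = (0,2,0)`, `v₃ = (0,0,2)`, `v₄ = (0, 2√2, 0)`,
`v₅ = (−1, −1+√2, 2−√3)`. -/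
def v : Fin 5 → Rng :=
  ![((1 : ℤ), (⟨1, 0⟩ : Zsqrtd 2), (⟨1, 0⟩ : Zsqrtd 3)),
    ((0 : ℤ), (⟨2, 0⟩ : Zsqrtd 2), (⟨0, 0⟩ : Zsqrtd 3)),
    ((0 : ℤ), (⟨0, 0⟩ : Zsqrtd 2), (⟨2, 0⟩ : Zsqrtd 3)),
    ((0 : ℤ), (⟨0, 2⟩ : Zsqrtd 2), (⟨0, 0⟩ : Zsqrtd 3)),
    ((-1 : ℤ), (⟨-1, 1⟩ : Zsqrtd 2), (⟨2, -1⟩ : Zsqrtd 3))]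

lemma modeq_iff_cast (a b : ℤ) : a ≡ b [ZMOD 2] ↔ ((a : ZMod 2) = b) :=
  (ZMod.intCast_eq_intCast_iff a b 2).symm

lemma mem_W_iff (p : Rng) : p ∈ Wset ↔
    ((p.1 : ZMod 2) = p.2.1.re ∧ (p.1 : ZMod 2) = p.2.2.re + p.2.2.im ∧
     (p.2.1.im : ZMod 2) = p.2.2.im) := by
  simp [Wset, modeq_iff_cast]

lemma mem_W_iff' (p : Rng) : p ∈ Wset ↔
    (p.1 % 2 = p.2.1.re % 2 ∧ p.1 % 2 = (p.2.2.re + p.2.2.im) % 2 ∧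
     p.2.1.im % 2 = p.2.2.im % 2) := Iff.rfl

lemma mulW {x y : Rng} (hx : x ∈ Wset) (hy : y ∈ Wset) : x * y ∈ Wset := by
  rw [mem_W_iff] at *
  obtain ⟨h1, h2, h3⟩ := hx
  obtain ⟨k1, k2, k3⟩ := hy
  have two : (2 : ZMod 2) = 0 := rfl
  simp only [Prod.fst_mul, Prod.snd_mul, Zsqrtd.re_mul, Zsqrtd.im_mul]
  push_cast
  refine ⟨?_, ?_, ?_⟩
  · linear_combination (↑y.1 : ZMod 2)*h1 + (↑x.2.1.re : ZMod 2)*k1 - (↑x.2.1.im : ZMod 2)*(↑y.2.1.im : ZMod 2)*two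
  · linear_combination (↑y.1 : ZMod 2)*h2 + ((↑x.2.2.re : ZMod 2)+(↑x.2.2.im : ZMod 2))*k2 - (↑x.2.2.im : ZMod 2)*(↑y.2.2.im : ZMod 2)*two
  · linear_combination (↑x.2.1.re : ZMod 2)*k3 + (↑y.2.2.im : ZMod 2)*(h2-h1) + (↑y.2.2.re : ZMod 2)*h3 + (↑x.2.1.im : ZMod 2)*(k2-k1) + (↑x.2.2.im : ZMod 2)*(↑y.2.2.im : ZMod 2)*two + (↑y.2.2.im : ZMod 2)*h3

lemma sum_v (c : Fin 5 → ℤ) : (∑ i, c i • v i) =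
    ((c 0 - c 4 : ℤ),
     (⟨c 0 + 2*c 1 - c 4, 2*c 3 + c 4⟩ : Zsqrtd 2),
     (⟨c 0 + 2*c 2 + 2*c 4, -c 4⟩ : Zsqrtd 3)) := by
  simp [Fin.sum_univ_five, v, Prod.ext_iff, Zsqrtd.ext_iff, Zsqrtd.re_smul, Zsqrtd.im_smul]
  omega

/-- `W` is closed under addition and multiplication and contains `1`, i.e. it is a subring of
`R = ℤ × ℤ[√2] × ℤ[√3]`; moreover as a `ℤ`-module it is free of rank `5` with basis
`v₁, v₂, v₃, v₄, v₅`, i.e. `W = ℤv₁ + ℤv₂ + ℤv₃ + ℤv₄ + ℤv₅` and the `vᵢ` are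
`ℤ`-linearly independent. -/
theorem stmt0 :
    (1 : Rng) ∈ Wset ∧
    (∀ x ∈ Wset, ∀ y ∈ Wset, x + y ∈ Wset) ∧
    (∀ x ∈ Wset, ∀ y ∈ Wset, x * y ∈ Wset) ∧
    (∃ S : Subring Rng, (S : Set Rng) = Wset) ∧
    LinearIndependent ℤ v ∧
    (∀ x : Rng, x ∈ Wset ↔ ∃ c : Fin 5 → ℤ, x = ∑ i, c i • v i) := by
  have hone : (1 : Rng) ∈ Wset := by
    rw [mem_W_iff']
    norm_num
  have hadd : ∀ x ∈ Wset, ∀ y ∈ Wset, x + y ∈ Wset := by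
    intro x hx y hy
    rw [mem_W_iff'] at *
    simp only [Prod.fst_add, Prod.snd_add, Zsqrtd.re_add, Zsqrtd.im_add]
    omega
  have hneg : ∀ x ∈ Wset, -x ∈ Wset := by
    intro x hx
    rw [mem_W_iff'] at *
    simp only [Prod.fst_neg, Prod.snd_neg, Zsqrtd.re_neg, Zsqrtd.im_neg]
    omega
  have hzero : (0 : Rng) ∈ Wset := by
    rw [mem_W_iff']
    norm_num
  refine ⟨hone, hadd, fun x hx y hy => mulW hx hy, ⟨⟨⟨⟨⟨Wset, fun {a b} => mulW⟩,
      hone⟩, fun {a b} ha hb => hadd a ha b hb, hzero⟩, fun {a} => hneg a⟩, rfl⟩, ?_, ?_⟩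
  · rw [Fintype.linearIndependent_iff]
    intro c hc i
    rw [sum_v] at hc
    simp only [Prod.ext_iff, Zsqrtd.ext_iff, Prod.fst_zero, Prod.snd_zero,
      Zsqrtd.re_zero, Zsqrtd.im_zero] at hc
    fin_cases i <;> [show c 0 = 0; show c 1 = 0; show c 2 = 0; show c 3 = 0; show c 4 = 0] <;> omega
  · intro x
    constructor
    · intro hx
      rw [mem_W_iff'] at hx
      refine ⟨![x.1 - x.2.2.im, (x.2.1.re - x.1)/2, (x.2.2.re + 3*x.2.2.im - x.1)/2,
        (x.2.1.im + x.2.2.im)/2, -x.2.2.im], ?_⟩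
      rw [sum_v]
      simp only [Matrix.cons_val_zero, Matrix.cons_val_one, Matrix.head_cons,
        Matrix.cons_val_two, Matrix.tail_cons, Matrix.cons_val_three, Matrix.cons_val_four]
      refine Prod.ext ?_ (Prod.ext ?_ ?_) <;>
        first
        | omega
        | (apply Zsqrtd.ext <;> simp <;> omega)
    · rintro ⟨c, rfl⟩
      rw [sum_v, mem_W_iff']
      simp only
      omega
end

section
/- The ℤ-submodule of R = ℤ × ℤ[√2] × ℤ[√3] spanned by the five elements T₁ = (1, 1, 1), T₂ = (−1, −1+√2, √3), T₃ = (−2, √2, 1−√3), T₅ = (−1, 1, −1), T₁₁ = (2, 2−√2, −3+√3) equals W; in particular, these five elements are ℤ-linearly independent and form a ℤ-basis of W. -/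
/-- `T₁ = (1,1,1)`, `T₂ = (−1, −1+√2, √3)`, `T₃ = (−2, √2, 1−√3)`, `T₅ = (−1, 1, −1)`,
`T₁₁ = (2, 2−√2, −3+√3)`. -/
def T : Fin 5 → Rng :=
  ![((1 : ℤ), (⟨1, 0⟩ : Zsqrtd 2), (⟨1, 0⟩ : Zsqrtd 3)),
    ((-1 : ℤ), (⟨-1, 1⟩ : Zsqrtd 2), (⟨0, 1⟩ : Zsqrtd 3)),
    ((-2 : ℤ), (⟨0, 1⟩ : Zsqrtd 2), (⟨1, -1⟩ : Zsqrtd 3)),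
    ((-1 : ℤ), (⟨1, 0⟩ : Zsqrtd 2), (⟨-1, 0⟩ : Zsqrtd 3)),
    ((2 : ℤ), (⟨2, -1⟩ : Zsqrtd 2), (⟨-3, 1⟩ : Zsqrtd 3))]

lemma my_zsmul_re {d : ℤ} (n : ℤ) (z : Zsqrtd d) : (n • z).re = n * z.re := by
  rw [zsmul_eq_mul]; exact Zsqrtd.re_smul n z

lemma my_zsmul_im {d : ℤ} (n : ℤ) (z : Zsqrtd d) : (n • z).im = n * z.im := by
  rw [zsmul_eq_mul]; exact Zsqrtd.im_smul n z

/-- The `ℤ`-submodule of `R = ℤ × ℤ[√2] × ℤ[√3]` spanned by `T₁, T₂, T₃, T₅, T₁₁` equals `W`;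
in particular these five elements are `ℤ`-linearly independent, so they form a `ℤ`-basis
of `W`. -/
theorem stmt1 :
    (Submodule.span ℤ (Set.range T) : Set Rng) = Wset ∧ LinearIndependent ℤ T := by
  constructor
  · apply Set.Subset.antisymm
    · -- span ⊆ Wset : Wset is a submodule containing each T i
      have hW : ∀ i, T i ∈ Wset := by
        intro i
        fin_cases i <;> exact ⟨by decide, by decide, by decide⟩
      have : Submodule.span ℤ (Set.range T) ≤
          { carrier := Wset
            add_mem' := by
              rintro ⟨a, ⟨b1, b2⟩, ⟨c1, c2⟩⟩ ⟨a', ⟨b1', b2'⟩, ⟨c1', c2'⟩⟩ hp hq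
              simp only [Wset, Set.mem_setOf_eq, Int.ModEq, Prod.mk_add_mk,
                Zsqrtd.add_def] at *
              omega
            zero_mem' := by simp [Wset, Int.ModEq]
            smul_mem' := by
              rintro c ⟨a, ⟨b1, b2⟩, ⟨c1, c2⟩⟩ hp
              simp only [Wset, Set.mem_setOf_eq, Prod.smul_mk,
                my_zsmul_re, my_zsmul_im, smul_eq_mul] at *
              obtain ⟨h1, h2, h3⟩ := hp
              exact ⟨h1.mul_left c, by simpa [mul_add] using h2.mul_left c,
                h3.mul_left c⟩ } := by
        rw [Submodule.span_le]
        rintro _ ⟨i, rfl⟩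
        exact hW i
      exact this
    · -- Wset ⊆ span
      rintro ⟨a, ⟨b1, b2⟩, ⟨c1, c2⟩⟩ ⟨h1, h2, h3⟩
      simp only at h1 h2 h3
      obtain ⟨j, hj⟩ : (2 : ℤ) ∣ a - b1 := h1.symm.dvd
      obtain ⟨k, hk⟩ : (2 : ℤ) ∣ a - (c1 + c2) := h2.symm.dvd
      obtain ⟨l, hl⟩ : (2 : ℤ) ∣ b2 - c2 := h3.symm.dvd
      have hmem : ∀ i : Fin 5, T i ∈ Submodule.span ℤ (Set.range T) := fun i =>
        Submodule.subset_span ⟨i, rfl⟩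
      have key : ((a, (⟨b1, b2⟩ : Zsqrtd 2), (⟨c1, c2⟩ : Zsqrtd 3)) : Rng) =
          (a - j - k) • T 0 + (c2 + l) • T 1 + (k + c2 + 3*l) • T 2 +
          (-(j + k + c2 + 3*l)) • T 3 + (k + c2 + 2*l) • T 4 := by
        simp only [T, Matrix.cons_val_zero, Matrix.cons_val_one, Matrix.head_cons,
          Matrix.cons_val_two, Matrix.tail_cons, Matrix.cons_val_three,
          Matrix.cons_val_four, Matrix.cons_val_succ, Prod.smul_mk, Prod.mk_add_mk,
          smul_eq_mul, Prod.mk.injEq, Zsqrtd.ext_iff, Zsqrtd.re_add, Zsqrtd.im_add,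
          my_zsmul_re, my_zsmul_im]
        refine ⟨by omega, ⟨by omega, by omega⟩, ⟨by omega, by omega⟩⟩
      rw [key]
      exact Submodule.add_mem _ (Submodule.add_mem _ (Submodule.add_mem _
        (Submodule.add_mem _ (Submodule.smul_mem _ _ (hmem 0))
          (Submodule.smul_mem _ _ (hmem 1))) (Submodule.smul_mem _ _ (hmem 2)))
        (Submodule.smul_mem _ _ (hmem 3))) (Submodule.smul_mem _ _ (hmem 4))
  · rw [Fintype.linearIndependent_iff]
    intro g hg
    rw [Fin.sum_univ_five] at hg
    simp only [T, Matrix.cons_val_zero, Matrix.cons_val_one, Matrix.head_cons,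
      Matrix.cons_val_two, Matrix.tail_cons, Matrix.cons_val_three,
      Matrix.cons_val_four, Matrix.cons_val_succ, Prod.smul_mk, Prod.mk_add_mk,
      smul_eq_mul, Prod.mk.injEq, Zsqrtd.ext_iff, Zsqrtd.re_add, Zsqrtd.im_add,
      my_zsmul_re, my_zsmul_im, Prod.mk_eq_zero, Zsqrtd.re_zero, Zsqrtd.im_zero,
      Prod.ext_iff, Prod.fst_zero, Prod.snd_zero] at hg
    obtain ⟨e1, ⟨e2, e3⟩, e4, e5⟩ := hg
    intro i
    fin_cases i
    · show g 0 = 0; omega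
    · show g 1 = 0; omega
    · show g 2 = 0; omega
    · show g 3 = 0; omega
    · show g 4 = 0; omega
end
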